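/- arXiv:1704.03514 — 4 statements merged into one kernel-verified Lean document; each statement's English description precedes it below -/
import Mathlib

section
/- Let S : ℝ → ℝ be continuous and monotone nondecreasing, and suppose f : ℝ → ℝ is such that for every t₀ in an interval [a,b] on which S is not locally constant at any point, the F^α-derivative D_F^α f(t₀) exists and equals 0 (i.e., lim_{t→t₀} (f(t)−f(t₀))/(S(t)−S(t₀)) = 0 along points with S(t) ≠ S(t₀)), and f is continuous on [a,b] and constant on any interval where S is constant. Then f is constant on [a,b]. -/
/-- `S` is not locally constant at `t₀`. -/
def NotLocallyConstantAt (S : ℝ → ℝ) (t₀ : ℝ) : Prop :=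
  ∀ δ > 0, ∃ t, |t - t₀| < δ ∧ S t ≠ S t₀

/-- The `F^α`-derivative of `f` at `t₀` with respect to the staircase function `S` equals `L`:
the limit of the difference quotient taken along points where `S t ≠ S t₀`. -/
def FDerivAtS (S f : ℝ → ℝ) (t₀ L : ℝ) : Prop :=
  Filter.Tendsto (fun t => (f t - f t₀) / (S t - S t₀))
    (nhdsWithin t₀ {t | S t ≠ S t₀}) (nhds L)

theorem fderiv_zero_imp_const (S f : ℝ → ℝ) (hS : Continuous S) (hmono : Monotone S)
    (a b : ℝ) (hab : a ≤ b)
    (hne : ∀ t₀ ∈ Set.Icc a b, NotLocallyConstantAt S t₀)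
    (hf : ContinuousOn f (Set.Icc a b))
    (hconst : ∀ s u, Set.Icc s u ⊆ Set.Icc a b →
      (∀ x ∈ Set.Icc s u, S x = S s) → ∀ x ∈ Set.Icc s u, f x = f s)
    (hderiv : ∀ t₀ ∈ Set.Icc a b, FDerivAtS S f t₀ 0) :
    ∀ x ∈ Set.Icc a b, ∀ y ∈ Set.Icc a b, f x = f y := by
  -- key estimate
  have key : ∀ ε > 0, ∀ x ∈ Set.Icc a b, ∀ y ∈ Set.Icc a b, x ≤ y →
      |f y - f x| ≤ ε * (S y - S x) := by
    intro ε hε x hx y hy hxy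
    set s : Set ℝ := {z | |f z - f x| ≤ ε * (S z - S x)} with hs
    have hsub : Set.Icc x b ⊆ Set.Icc a b := Set.Icc_subset_Icc hx.1 le_rfl
    have hclosed : IsClosed (s ∩ Set.Icc x b) := by
      have hg : ContinuousOn (fun z => |f z - f x| - ε * (S z - S x)) (Set.Icc x b) :=
        ContinuousOn.sub (((hf.mono hsub).sub continuousOn_const).abs)
          (continuousOn_const.mul ((hS.continuousOn.sub continuousOn_const)))
      have : s ∩ Set.Icc x b =
          Set.Icc x b ∩ (fun z => |f z - f x| - ε * (S z - S x)) ⁻¹' (Set.Iic 0) := by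
        ext z; simp [hs, Set.mem_inter_iff, and_comm, sub_nonpos]
      rw [this]
      exact hg.preimage_isClosed_of_isClosed isClosed_Icc isClosed_Iic
    have hxs : x ∈ s := by simp [hs]
    have hsubset : Set.Icc x b ⊆ s := by
      apply hclosed.Icc_subset_of_forall_exists_gt hxs
      intro x' hx' y' hy'
      have hx'ab : x' ∈ Set.Icc a b := ⟨le_trans hx.1 hx'.2.1, hx'.2.2.le⟩
      have hx's : x' ∈ s := hx'.1
      obtain ⟨δ, hδ, hδ'⟩ := Metric.tendsto_nhdsWithin_nhds.mp (hderiv x' hx'ab) ε hε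
      set t : ℝ := min (x' + δ / 2) (min y' b) with ht
      have htx' : x' < t := by
        simp only [ht, lt_min_iff]
        exact ⟨by linarith, hy', hx'.2.2⟩
      have htb : t ≤ b := le_trans (min_le_right _ _) (min_le_right _ _)
      have hty : t ≤ y' := le_trans (min_le_right _ _) (min_le_left _ _)
      have htd : |t - x'| < δ := by
        rw [abs_of_pos (by linarith)]
        have : t ≤ x' + δ / 2 := min_le_left _ _
        linarith
      have htab : t ∈ Set.Icc a b := ⟨le_trans hx'ab.1 htx'.le, htb⟩
      refine ⟨t, ?_, htx', hty⟩
      have hSle : S x' ≤ S t := hmono htx'.le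
      have hxs' : |f x' - f x| ≤ ε * (S x' - S x) := hx's
      by_cases hST : S t = S x'
      · -- S constant on [x', t], so f t = f x'
        have hconst' : ∀ z ∈ Set.Icc x' t, S z = S x' := by
          intro z hz
          exact le_antisymm (hST ▸ hmono hz.2) (hmono hz.1)
        have hft : f t = f x' :=
          hconst x' t (Set.Icc_subset_Icc hx'ab.1 htb) hconst' t ⟨htx'.le, le_rfl⟩
        show |f t - f x| ≤ ε * (S t - S x)
        rw [hft]
        calc |f x' - f x| ≤ ε * (S x' - S x) := hxs'
          _ ≤ ε * (S t - S x) := by nlinarith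
      · -- use the derivative bound
        have hq : dist ((f t - f x') / (S t - S x')) 0 < ε := hδ' hST (by rwa [Real.dist_eq])
        rw [Real.dist_eq, sub_zero, abs_div] at hq
        have hSpos : 0 < |S t - S x'| := abs_pos.mpr (sub_ne_zero.mpr hST)
        have h1 : |f t - f x'| < ε * |S t - S x'| := by
          rw [div_lt_iff₀ hSpos] at hq; linarith
        have h2 : |S t - S x'| = S t - S x' := abs_of_nonneg (by linarith)
        show |f t - f x| ≤ ε * (S t - S x)
        calc |f t - f x| ≤ |f t - f x'| + |f x' - f x| := abs_sub_le _ _ _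
          _ ≤ ε * (S t - S x') + ε * (S x' - S x) := by rw [h2] at h1; linarith
          _ = ε * (S t - S x) := by ring
    exact hsubset ⟨hxy, hy.2⟩
  -- conclude
  have main : ∀ x ∈ Set.Icc a b, ∀ y ∈ Set.Icc a b, x ≤ y → f x = f y := by
    intro x hx y hy hxy
    have hC : (0:ℝ) ≤ S y - S x := by have := hmono hxy; linarith
    have habs : |f y - f x| ≤ 0 := by
      apply le_of_forall_pos_le_add
      intro ε' hε'
      have hε : 0 < ε' / (S y - S x + 1) := by positivity
      have := key _ hε x hx y hy hxy
      calc |f y - f x| ≤ ε' / (S y - S x + 1) * (S y - S x) := this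
        _ ≤ ε' := by
          rw [div_mul_eq_mul_div, div_le_iff₀ (by linarith)]
          nlinarith
        _ = 0 + ε' := by ring
    have : f y - f x = 0 := abs_eq_zero.mp (le_antisymm habs (abs_nonneg _))
    linarith
  intro x hx y hy
  rcases le_total x y with h | h
  · exact main x hx y hy h
  · exact (main y hy x hx h).symm
end

section
/- Let S : ℝ → ℝ be continuous and monotone nondecreasing, f : ℝ → ℝ continuous and bounded on [a,b], and define g(t) = ∫_a^t f dS (Riemann–Stieltjes integral with respect to S). Then at every t₀ ∈ (a,b) where S is not locally constant, the F^α-derivative of g at t₀ exists and equals f(t₀), i.e., lim_{t→t₀} (g(t)−g(t₀))/(S(t)−S(t₀)) = f(t₀) along points with S(t) ≠ S(t₀). -/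
/-- `I` is the Riemann–Stieltjes integral of `f` with respect to `S` over `[a,b]`. -/
def IsRSIntegral (S f : ℝ → ℝ) (a b I : ℝ) : Prop :=
  ∀ ε > 0, ∃ δ > 0, ∀ (n : ℕ) (t τ : ℕ → ℝ),
    0 < n → t 0 = a → t n = b →
    (∀ i < n, t i ≤ t (i + 1)) → (∀ i < n, t (i + 1) - t i < δ) →
    (∀ i < n, τ i ∈ Set.Icc (t i) (t (i + 1))) →
    |(∑ i ∈ Finset.range n, f (τ i) * (S (t (i + 1)) - S (t i))) - I| < ε

lemma rs_key (S f g : ℝ → ℝ) (hmono : Monotone S) (a c d : ℝ)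
    (hac : a ≤ c) (hcd : c < d) (K ε : ℝ)
    (hfK : ∀ τ ∈ Set.Icc c d, |f τ - K| ≤ ε)
    (hgc : IsRSIntegral S f a c (g c)) (hgd : IsRSIntegral S f a d (g d)) :
    |(g d - g c) - K * (S d - S c)| ≤ ε * (S d - S c) := by
  apply le_of_forall_pos_le_add
  intro η hη
  obtain ⟨δ₁, hδ₁, H₁⟩ := hgc (η / 2) (by positivity)
  obtain ⟨δ₂, hδ₂, H₂⟩ := hgd (η / 2) (by positivity)
  set δ : ℝ := min δ₁ δ₂ with hδdef
  have hδ : 0 < δ := lt_min hδ₁ hδ₂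
  obtain ⟨n, hn⟩ := exists_nat_gt (max ((c - a) / δ) 0)
  obtain ⟨m, hm⟩ := exists_nat_gt (max ((d - c) / δ) 0)
  have hn0 : (0 : ℝ) < n := lt_of_le_of_lt (le_max_right _ _) hn
  have hm0 : (0 : ℝ) < m := lt_of_le_of_lt (le_max_right _ _) hm
  have hnN : 0 < n := by exact_mod_cast hn0
  have hmN : 0 < m := by exact_mod_cast hm0
  have hca : (c - a) / n < δ := by
    rw [div_lt_iff₀ hn0]
    have h1 : (c - a) / δ < n := lt_of_le_of_lt (le_max_left _ _) hn
    calc c - a = (c - a) / δ * δ := by field_simp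
    _ < n * δ := by exact mul_lt_mul_of_pos_right h1 hδ
    _ = δ * n := mul_comm _ _
  have hdc : (d - c) / m < δ := by
    rw [div_lt_iff₀ hm0]
    have h1 : (d - c) / δ < m := lt_of_le_of_lt (le_max_left _ _) hm
    calc d - c = (d - c) / δ * δ := by field_simp
    _ < m * δ := by exact mul_lt_mul_of_pos_right h1 hδ
    _ = δ * m := mul_comm _ _
  have hca0 : 0 ≤ (c - a) / n := div_nonneg (by linarith) hn0.le
  have hdc0 : 0 ≤ (d - c) / m := div_nonneg (by linarith) hm0.le
  set u : ℕ → ℝ := fun i => if i ≤ n then a + i * ((c - a) / n)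
    else c + ((i : ℝ) - n) * ((d - c) / m) with hu
  have hu0 : u 0 = a := by simp [hu]
  have hun : u n = c := by
    simp only [hu, le_refl, if_pos]
    field_simp
    ring
  have hunm : u (n + m) = d := by
    have : ¬ (n + m ≤ n) := by omega
    simp only [hu, this, if_false]
    push_cast
    field_simp
    ring
  have hstep : ∀ i, u (i + 1) - u i = if i < n then (c - a) / n else (d - c) / m := by
    intro i
    by_cases h1 : i + 1 ≤ n
    · have h2 : i ≤ n := by omega
      have h3 : i < n := by omega
      simp only [hu, h1, h2, if_pos, h3]
      push_cast; ring
    · by_cases h2 : i = n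
      · rw [h2]
        have h3 : ¬ (n + 1 ≤ n) := by omega
        have h4 : ¬ (n < n) := by omega
        simp only [hu, h3, if_false, le_refl, if_pos, h4]
        have : (a : ℝ) + n * ((c - a) / n) = c := by field_simp; ring
        rw [this]; push_cast; ring
      · have h3 : ¬ (i ≤ n) := by omega
        have h4 : ¬ (i + 1 ≤ n) := h1
        have h5 : ¬ (i < n) := by omega
        simp only [hu, h3, h4, if_false, h5]
        push_cast; ring
  have hstep_nonneg : ∀ i, u i ≤ u (i + 1) := by
    intro i
    have := hstep i
    by_cases h1 : i < n <;> simp [h1] at this <;> linarith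
  have hstep_lt : ∀ i, u (i + 1) - u i < δ := by
    intro i
    have := hstep i
    by_cases h1 : i < n <;> simp [h1] at this <;> linarith
  have humono : Monotone u := monotone_nat_of_le_succ hstep_nonneg
  have hτ : ∀ k, ∀ i < k, u i ∈ Set.Icc (u i) (u (i + 1)) := by
    intro k i _
    exact ⟨le_refl _, hstep_nonneg i⟩
  have E1 : |(∑ i ∈ Finset.range n, f (u i) * (S (u (i + 1)) - S (u i))) - g c| < η / 2 :=
    H₁ n u u hnN hu0 hun (fun i _ => hstep_nonneg i)
      (fun i _ => lt_of_lt_of_le (hstep_lt i) (min_le_left _ _)) (hτ n)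
  have E2 : |(∑ i ∈ Finset.range (n + m), f (u i) * (S (u (i + 1)) - S (u i))) - g d| < η / 2 :=
    H₂ (n + m) u u (by omega) hu0 hunm (fun i _ => hstep_nonneg i)
      (fun i _ => lt_of_lt_of_le (hstep_lt i) (min_le_right _ _)) (hτ (n + m))
  set A := ∑ i ∈ Finset.range n, f (u i) * (S (u (i + 1)) - S (u i)) with hA
  set B := ∑ j ∈ Finset.range m, f (u (n + j)) * (S (u (n + j + 1)) - S (u (n + j))) with hB
  have hsplit : (∑ i ∈ Finset.range (n + m), f (u i) * (S (u (i + 1)) - S (u i))) = A + B := by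
    rw [Finset.sum_range_add]
  have htel : (∑ j ∈ Finset.range m, (S (u (n + j + 1)) - S (u (n + j)))) = S d - S c := by
    have := Finset.sum_range_sub (fun j => S (u (n + j))) m
    simpa [hun, hunm, add_assoc] using this
  have hΔnonneg : ∀ j, 0 ≤ S (u (n + j + 1)) - S (u (n + j)) := by
    intro j
    have := hmono (hstep_nonneg (n + j))
    linarith
  have hE3 : |B - K * (S d - S c)| ≤ ε * (S d - S c) := by
    have hrw : B - K * (S d - S c)
        = ∑ j ∈ Finset.range m, (f (u (n + j)) - K) * (S (u (n + j + 1)) - S (u (n + j))) := by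
      rw [← htel, Finset.mul_sum, hB, ← Finset.sum_sub_distrib]
      congr 1; ext j; ring
    rw [hrw, ← htel, Finset.mul_sum]
    refine le_trans (Finset.abs_sum_le_sum_abs _ _) (Finset.sum_le_sum ?_)
    intro j hj
    rw [abs_mul, abs_of_nonneg (hΔnonneg j)]
    apply mul_le_mul_of_nonneg_right _ (hΔnonneg j)
    apply hfK
    constructor
    · calc c = u n := hun.symm
      _ ≤ u (n + j) := humono (by omega)
    · calc u (n + j) ≤ u (n + m) := humono (by simp at hj; omega)
      _ = d := hunm
  have key : (g d - g c) - K * (S d - S c)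
      = (g d - (A + B)) + (A - g c) + (B - K * (S d - S c)) := by ring
  rw [key]
  calc |(g d - (A + B)) + (A - g c) + (B - K * (S d - S c))|
      ≤ |g d - (A + B)| + |A - g c| + |B - K * (S d - S c)| := by
        exact le_trans (abs_add_le _ _) (by gcongr; exact abs_add_le _ _)
  _ ≤ η / 2 + η / 2 + ε * (S d - S c) := by
        have e2 : |g d - (A + B)| < η / 2 := by rw [abs_sub_comm, ← hsplit]; exact E2
        exact add_le_add (add_le_add e2.le E1.le) hE3
  _ = ε * (S d - S c) + η := by ring

theorem fundamental_theorem_second_part (S f g : ℝ → ℝ)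
    (hS : Continuous S) (hmono : Monotone S) (a b : ℝ) (hab : a < b)
    (hf : ContinuousOn f (Set.Icc a b))
    (hbdd : ∃ M, ∀ t ∈ Set.Icc a b, |f t| ≤ M)
    (hg : ∀ t ∈ Set.Icc a b, IsRSIntegral S f a t (g t))
    (t₀ : ℝ) (ht₀ : t₀ ∈ Set.Ioo a b) (h : NotLocallyConstantAt S t₀) :
    Filter.Tendsto (fun t => (g t - g t₀) / (S t - S t₀))
      (nhdsWithin t₀ {t | S t ≠ S t₀}) (nhds (f t₀)) := by
  rw [Metric.tendsto_nhdsWithin_nhds]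
  intro ε hε
  have hcf : ContinuousAt f t₀ := hf.continuousAt (Icc_mem_nhds ht₀.1 ht₀.2)
  obtain ⟨δ₀, hδ₀, hfδ⟩ := Metric.continuousAt_iff.mp hcf (ε / 2) (by positivity)
  refine ⟨min δ₀ (min (t₀ - a) (b - t₀)), by
    apply lt_min hδ₀; apply lt_min <;> linarith [ht₀.1, ht₀.2], ?_⟩
  intro t ht hdist
  have ht' : S t ≠ S t₀ := ht
  have hd1 : |t - t₀| < δ₀ := lt_of_lt_of_le (by rwa [Real.dist_eq] at hdist) (min_le_left _ _)
  have hd2 : |t - t₀| < t₀ - a := lt_of_lt_of_le (by rwa [Real.dist_eq] at hdist)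
    (le_trans (min_le_right _ _) (min_le_left _ _))
  have hd3 : |t - t₀| < b - t₀ := lt_of_lt_of_le (by rwa [Real.dist_eq] at hdist)
    (le_trans (min_le_right _ _) (min_le_right _ _))
  have hta : a < t := by cases abs_sub_lt_iff.mp hd2 with
    | intro h1 h2 => linarith
  have htb : t < b := by cases abs_sub_lt_iff.mp hd3 with
    | intro h1 h2 => linarith
  have htI : t ∈ Set.Icc a b := ⟨hta.le, htb.le⟩
  have ht₀I : t₀ ∈ Set.Icc a b := ⟨ht₀.1.le, ht₀.2.le⟩
  have hd1' : ∀ τ, |τ - t₀| ≤ |t - t₀| → |f τ - f t₀| ≤ ε / 2 := by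
    intro τ hτ
    have := hfδ (x := τ) (by rw [Real.dist_eq]; exact lt_of_le_of_lt hτ hd1)
    rw [Real.dist_eq] at this
    linarith
  -- main estimate
  have main : |(g t - g t₀) - f t₀ * (S t - S t₀)| ≤ ε / 2 * |S t - S t₀| := by
    rcases lt_trichotomy t t₀ with hlt | heq | hgt
    · have hSle : S t ≤ S t₀ := hmono hlt.le
      have := rs_key S f g hmono a t t₀ hta.le hlt (f t₀) (ε / 2)
        (fun τ hτ => hd1' τ (by
          have e1 : |τ - t₀| = t₀ - τ := by
            rw [abs_sub_comm]; exact abs_of_nonneg (by linarith [hτ.2])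
          have e2 : |t - t₀| = t₀ - t := by
            rw [abs_sub_comm]; exact abs_of_nonneg (by linarith)
          rw [e1, e2]; linarith [hτ.1]))
        (hg t htI) (hg t₀ ht₀I)
      rw [abs_sub_comm (S t) (S t₀), abs_of_nonneg (by linarith : (0:ℝ) ≤ S t₀ - S t)]
      calc |(g t - g t₀) - f t₀ * (S t - S t₀)|
          = |(g t₀ - g t) - f t₀ * (S t₀ - S t)| := by rw [← abs_neg]; congr 1; ring
      _ ≤ ε / 2 * (S t₀ - S t) := this
    · exact absurd (by rw [heq]) ht'
    · have hSle : S t₀ ≤ S t := hmono hgt.le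
      have := rs_key S f g hmono a t₀ t ht₀.1.le hgt (f t₀) (ε / 2)
        (fun τ hτ => hd1' τ (by
          have e1 : |τ - t₀| = τ - t₀ := abs_of_nonneg (by linarith [hτ.1])
          have e2 : |t - t₀| = t - t₀ := abs_of_nonneg (by linarith)
          rw [e1, e2]; linarith [hτ.2]))
        (hg t₀ ht₀I) (hg t htI)
      rw [abs_of_nonneg (by linarith : (0:ℝ) ≤ S t - S t₀)]
      exact this
  have hD : S t - S t₀ ≠ 0 := sub_ne_zero.mpr ht'
  have hDpos : 0 < |S t - S t₀| := abs_pos.mpr hD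
  rw [Real.dist_eq]
  have hrw : (g t - g t₀) / (S t - S t₀) - f t₀
      = ((g t - g t₀) - f t₀ * (S t - S t₀)) / (S t - S t₀) := by
    field_simp
  rw [hrw, abs_div, div_lt_iff₀ hDpos]
  calc |(g t - g t₀) - f t₀ * (S t - S t₀)| ≤ ε / 2 * |S t - S t₀| := main
  _ < ε * |S t - S t₀| := by
    apply mul_lt_mul_of_pos_right _ hDpos
    linarith
end

section
/- Let S : ℝ → ℝ be continuous and monotone nondecreasing, and k, m > 0, v₀, r₀ ∈ ℝ. Define r(t) = (k/(2m))·S(t)² + v₀·S(t) + r₀ and v(t) = (k/m)·S(t) + v₀. Then at every point t₀ where S is not locally constant, the F^α-derivative of r equals v(t₀), and the F^α-derivative of v equals k/m; hence m·(D_F^α)² r = k, i.e., r solves the generalized Newton equation with constant force k. -/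
theorem newton_constant_force (S : ℝ → ℝ) (hS : Continuous S) (hmono : Monotone S)
    (k m v₀ r₀ : ℝ) (hk : 0 < k) (hm : 0 < m)
    (r v : ℝ → ℝ)
    (hr : ∀ t, r t = k / (2 * m) * (S t) ^ 2 + v₀ * S t + r₀)
    (hv : ∀ t, v t = k / m * S t + v₀)
    (t₀ : ℝ) (h : NotLocallyConstantAt S t₀) :
    FDerivAtS S r t₀ (v t₀) ∧ FDerivAtS S v t₀ (k / m) ∧ m * (k / m) = k := by
  have hm' : (m : ℝ) ≠ 0 := ne_of_gt hm
  refine ⟨?_, ?_, by field_simp⟩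
  · -- first derivative
    have h1 : ∀ t ∈ {t | S t ≠ S t₀},
        (r t - r t₀) / (S t - S t₀) = k / (2 * m) * (S t + S t₀) + v₀ := by
      intro t ht
      have hne : S t - S t₀ ≠ 0 := sub_ne_zero.mpr ht
      rw [hr, hr]
      field_simp
      ring
    have h2 : Filter.Tendsto (fun t => k / (2 * m) * (S t + S t₀) + v₀)
        (nhdsWithin t₀ {t | S t ≠ S t₀}) (nhds (v t₀)) := by
      have : Filter.Tendsto (fun t => k / (2 * m) * (S t + S t₀) + v₀)
          (nhds t₀) (nhds (k / (2 * m) * (S t₀ + S t₀) + v₀)) := by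
        exact (((continuous_const.mul (hS.add continuous_const)).add
          continuous_const).tendsto t₀)
      have heq : k / (2 * m) * (S t₀ + S t₀) + v₀ = v t₀ := by
        rw [hv]; field_simp; ring
      rw [heq] at this
      exact this.mono_left nhdsWithin_le_nhds
    exact Filter.Tendsto.congr' (by filter_upwards [self_mem_nhdsWithin] using
      fun t ht => (h1 t ht).symm) h2
  · -- second derivative: quotient is constantly k/m
    have h1 : ∀ t ∈ {t | S t ≠ S t₀}, (v t - v t₀) / (S t - S t₀) = k / m := by
      intro t ht
      have hne : S t - S t₀ ≠ 0 := sub_ne_zero.mpr ht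
      rw [hv, hv]
      field_simp
      ring
    exact Filter.Tendsto.congr' (by filter_upwards [self_mem_nhdsWithin] using
      fun t ht => (h1 t ht).symm) tendsto_const_nhds
end

section
/- Let S : ℝ → ℝ be continuous, strictly monotone increasing, and let ζ : ℝ → ℝ be continuous with ζ(0) = ζ₀, such that for all t₀ the F^α-derivative D_F^α ζ(t₀) = lim_{t→t₀} (ζ(t)−ζ(t₀))/(S(t)−S(t₀)) exists and equals −k·ζ(t₀). Then ζ(t) = ζ₀·exp(−k·(S(t) − S(0))) for all t. -/
open Set Filter Function

/-- The image filter of the punctured neighborhood under a continuous strictly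
monotone map is coarser than the punctured neighborhood within the range. -/
lemma nhdsWithin_range_le_map (S : ℝ → ℝ) (hS : Continuous S) (hmono : StrictMono S)
    (t₀ : ℝ) :
    nhdsWithin (S t₀) (range S \ {S t₀}) ≤
      Filter.map S (nhdsWithin t₀ {t | S t ≠ S t₀}) := by
  intro A hA
  rw [Filter.mem_map, mem_nhdsWithin] at hA
  obtain ⟨V, hVopen, ht₀V, hVsub⟩ := hA
  obtain ⟨ε, hε, hball⟩ := Metric.isOpen_iff.1 hVopen t₀ ht₀V
  have hab : t₀ - ε < t₀ ∧ t₀ < t₀ + ε := ⟨by linarith, by linarith⟩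
  rw [mem_nhdsWithin]
  refine ⟨Ioo (S (t₀ - ε)) (S (t₀ + ε)), isOpen_Ioo,
    ⟨hmono hab.1, hmono hab.2⟩, ?_⟩
  rintro u ⟨⟨h1, h2⟩, ⟨t, rfl⟩, hne⟩
  have ht1 : t₀ - ε < t := (hmono.lt_iff_lt).1 h1
  have ht2 : t < t₀ + ε := (hmono.lt_iff_lt).1 h2
  have htV : t ∈ V := hball (by rw [Real.ball_eq_Ioo]; exact ⟨ht1, ht2⟩)
  exact hVsub ⟨htV, by simpa using hne⟩

theorem absorption_uniqueness (S ζ : ℝ → ℝ) (hS : Continuous S) (hmono : StrictMono S)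
    (hζ : Continuous ζ) (ζ₀ k : ℝ) (hζ0 : ζ 0 = ζ₀)
    (hode : ∀ t₀ : ℝ, FDerivAtS S ζ t₀ (-k * ζ t₀)) :
    ∀ t, ζ t = ζ₀ * Real.exp (-k * (S t - S 0)) := by
  have hinj : Function.Injective S := hmono.injective
  set T : ℝ → ℝ := Function.invFun S with hT
  have hTS : ∀ t, T (S t) = t := fun t => Function.leftInverse_invFun hinj t
  set g : ℝ → ℝ := fun u => ζ (T u) with hg
  -- the substituted function solves the ordinary ODE within the range of S
  have key : ∀ t₀ : ℝ, HasDerivWithinAt g (-k * ζ t₀) (range S) (S t₀) := by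
    intro t₀
    rw [hasDerivWithinAt_iff_tendsto_slope]
    have h1 : Filter.Tendsto (slope g (S t₀))
        (Filter.map S (nhdsWithin t₀ {t | S t ≠ S t₀})) (nhds (-k * ζ t₀)) := by
      rw [Filter.tendsto_map'_iff]
      have : (slope g (S t₀)) ∘ S = fun t => (ζ t - ζ t₀) / (S t - S t₀) := by
        funext t
        simp [slope_def_field, hg, hTS]
      rw [this]
      exact hode t₀
    exact h1.mono_left (by simpa using nhdsWithin_range_le_map S hS hmono t₀)
  -- turn it into: G := g * exp(k·u) has zero derivative within range S
  set G : ℝ → ℝ := fun u => g u * Real.exp (k * u) with hG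
  have keyG : ∀ t₀ : ℝ, HasDerivWithinAt G 0 (range S) (S t₀) := by
    intro t₀
    have hexp : HasDerivAt (fun u : ℝ => Real.exp (k * u))
        (Real.exp (k * S t₀) * k) (S t₀) := by
      simpa using ((hasDerivAt_id (S t₀)).const_mul k).exp
    have := (key t₀).mul hexp.hasDerivWithinAt
    have hgval : g (S t₀) = ζ t₀ := by simp [hg, hTS]
    rw [hgval] at this
    rw [show -k * ζ t₀ * Real.exp (k * S t₀) + ζ t₀ * (Real.exp (k * S t₀) * k) = 0 by
      ring] at this
    exact this
  -- constancy of G between S 0 and S t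
  have main : ∀ t : ℝ, G (S t) = G (S 0) := by
    have aux : ∀ a b : ℝ, a ≤ b → G (S b) = G (S a) := by
      intro a b hab
      have hsub : Icc (S a) (S b) ⊆ range S := intermediate_value_univ a b hS
      have hderiv : ∀ x ∈ Icc (S a) (S b), HasDerivWithinAt G 0 (range S) x := by
        rintro x hx
        obtain ⟨t₀, rfl⟩ := hsub hx
        exact keyG t₀
      have hcont : ContinuousOn G (Icc (S a) (S b)) := fun x hx =>
        ((hderiv x hx).continuousWithinAt).mono hsub
      have hder' : ∀ x ∈ Ico (S a) (S b), HasDerivWithinAt G 0 (Ici x) x := by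
        intro x hx
        refine (hderiv x (Ico_subset_Icc_self hx)).mono_of_mem_nhdsWithin ?_
        have h1 : Iic (S b) ∈ nhdsWithin x (Ici x) :=
          mem_nhdsWithin_of_mem_nhds (Iic_mem_nhds hx.2)
        have h2 : Ici x ∈ nhdsWithin x (Ici x) := self_mem_nhdsWithin
        filter_upwards [h1, h2] with y hy1 hy2
        exact hsub ⟨le_trans hx.1 hy2, hy1⟩
      have := constant_of_has_deriv_right_zero hcont hder' (S b)
        (right_mem_Icc.2 (hmono.monotone hab))
      exact this
    intro t
    rcases le_total 0 t with h | h
    · exact aux 0 t h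
    · exact (aux t 0 h).symm
  intro t
  have hGt : G (S t) = ζ t * Real.exp (k * S t) := by simp [hG, hg, hTS]
  have hG0 : G (S 0) = ζ₀ * Real.exp (k * S 0) := by simp [hG, hg, hTS, hζ0]
  have h := main t
  rw [hGt, hG0] at h
  have hexp_ne : Real.exp (k * S t) ≠ 0 := Real.exp_ne_zero _
  have : ζ t = ζ₀ * Real.exp (k * S 0) / Real.exp (k * S t) := by
    field_simp at h ⊢
    linarith [h]
  rw [this, div_eq_mul_inv, ← Real.exp_neg, mul_assoc, ← Real.exp_add]
  ring_nf
end
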